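/- Let G be a graph possessing a perfect matching of size μ = n/2, let α ≥ 0, and let M be a maximal matching of G with |M| ≤ (1/2 + α)·μ. Then the symmetric difference M ⊕ OPT of M with a maximum matching OPT contains at least (1/2 - 3α)·μ vertex-disjoint augmenting paths of length three. -/

import Mathlib

/-- The vertex set of a length-three augmenting path encoded as a 4-tuple. -/
def pathVerts {V : Type*} [DecidableEq V] (p : V × V × V × V) : Finset V :=
  {p.1, p.2.1, p.2.2.1, p.2.2.2}

lemma card4_aux {V : Type*} [DecidableEq V] {a b c d : V} (h1 : a ≠ b) (h2 : a ≠ c) (h3 : a ≠ d)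
    (h4 : b ≠ c) (h5 : b ≠ d) (h6 : c ≠ d) : ({a, b, c, d} : Finset V).card = 4 := by
  rw [Finset.card_insert_of_notMem (by simp [h1, h2, h3]),
    Finset.card_insert_of_notMem (by simp [h4, h5]),
    Finset.card_insert_of_notMem (by simp [h6]), Finset.card_singleton]

theorem stmt_8 {V : Type*} [Fintype V] [DecidableEq V] (G : SimpleGraph V)
    (OPT M : G.Subgraph) (hOPT : OPT.IsPerfectMatching) (hM : M.IsMatching)
    (hmax : ∀ M' : G.Subgraph, M ≤ M' → M'.IsMatching → M' = M)
    (α : ℝ) (hα : 0 ≤ α)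
    (hsize : (M.edgeSet.ncard : ℝ) ≤ (1 / 2 + α) * ((Fintype.card V : ℝ) / 2)) :
    ∃ P : Finset (V × V × V × V),
      ((1 / 2 - 3 * α) * ((Fintype.card V : ℝ) / 2) ≤ (P.card : ℝ)) ∧
      (∀ p ∈ P, OPT.Adj p.1 p.2.1 ∧ M.Adj p.2.1 p.2.2.1 ∧ OPT.Adj p.2.2.1 p.2.2.2 ∧
        p.1 ∉ M.support ∧ p.2.2.2 ∉ M.support ∧
        (pathVerts p).card = 4) ∧
      (∀ p ∈ P, ∀ q ∈ P, p ≠ q → Disjoint (pathVerts p) (pathVerts q)) := by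
  classical
  have hOu : ∀ v : V, ∃! w, OPT.Adj v w := fun v => hOPT.1 (hOPT.2 v)
  obtain ⟨fO, hfO⟩ : ∃ f : V → V, ∀ v, OPT.Adj v (f v) ∧ ∀ w, OPT.Adj v w → f v = w :=
    ⟨fun v => (hOu v).choose, fun v =>
      ⟨(hOu v).choose_spec.1, fun w h => ((hOu v).choose_spec.2 w h).symm⟩⟩
  have hfOadj : ∀ v, OPT.Adj v (fO v) := fun v => (hfO v).1
  have hfOu : ∀ {v w}, OPT.Adj v w → fO v = w := fun {v w} h => (hfO v).2 w h
  have hfOi : ∀ v, fO (fO v) = v := fun v => hfOu (hfOadj v).symm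
  have hfOinj : Function.Injective fO := Function.LeftInverse.injective hfOi
  obtain ⟨fM, hfM⟩ : ∃ f : V → V, ∀ v, v ∈ M.verts →
      (M.Adj v (f v) ∧ ∀ w, M.Adj v w → f v = w) := by
    refine ⟨fun v => if h : v ∈ M.verts then (hM h).choose else v, fun v hv => ?_⟩
    simp only [dif_pos hv]
    exact ⟨(hM hv).choose_spec.1, fun w h => ((hM hv).choose_spec.2 w h).symm⟩
  have hfMadj : ∀ v ∈ M.verts, M.Adj v (fM v) := fun v hv => (hfM v hv).1
  have hfMmem : ∀ v ∈ M.verts, fM v ∈ M.verts :=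
    fun v hv => M.edge_vert (hfMadj v hv).symm
  have hfMi : ∀ v ∈ M.verts, fM (fM v) = v :=
    fun v hv => (hfM (fM v) (hfMmem v hv)).2 v (hfMadj v hv).symm
  have hfMne : ∀ v ∈ M.verts, v ≠ fM v := fun v hv => (M.adj_sub (hfMadj v hv)).ne
  have hsupp : M.support = M.verts := hM.support_eq_verts
  -- maximality: the OPT-partner of an unmatched vertex is matched
  have hmaxv : ∀ v, v ∉ M.verts → fO v ∈ M.verts := by
    intro v hv
    by_contra hfv
    have hadj : G.Adj v (fO v) := OPT.adj_sub (hfOadj v)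
    have hdisj : Disjoint M.support (G.subgraphOfAdj hadj).support := by
      rw [SimpleGraph.support_subgraphOfAdj, hsupp]
      rw [Set.disjoint_right]
      rintro x (rfl | rfl) <;> simp_all
    have hM' := hM.sup (SimpleGraph.Subgraph.IsMatching.subgraphOfAdj hadj) hdisj
    have heq := hmax _ le_sup_left hM'
    have hadj' : (M ⊔ G.subgraphOfAdj hadj).Adj v (fO v) := by
      right; simp
    rw [heq] at hadj'
    exact hv (M.edge_vert hadj')
  -- finsets
  set S : Finset V := Finset.univ.filter (· ∈ M.verts) with hSdef
  set U : Finset V := Finset.univ.filter (· ∉ M.verts) with hUdef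
  set C : Finset V := S.filter (fun a => fO a ∈ M.verts) with hCdef
  set A : Finset V := S.filter (fun a => fO a ∉ M.verts ∧ fO (fM a) ∉ M.verts) with hAdef
  have hmemS : ∀ a, a ∈ S ↔ a ∈ M.verts := by intro a; simp [hSdef]
  have hmemU : ∀ a, a ∈ U ↔ a ∉ M.verts := by intro a; simp [hUdef]
  let ι : V → Fin (Fintype.card V) := Fintype.equivFin V
  have hιinj : Function.Injective ι := (Fintype.equivFin V).injective
  set A1 : Finset V := A.filter (fun a => ι a < ι (fM a)) with hA1def
  -- cardinalities
  have hUS : S.card + U.card = Fintype.card V := by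
    rw [hSdef, hUdef]
    exact (Finset.card_filter_add_card_filter_not _).trans (Finset.card_univ)
  have hCS : C ⊆ S := Finset.filter_subset _ _
  have hAS : A ⊆ S := Finset.filter_subset _ _
  have hCU : C.card + U.card ≤ S.card := by
    have hmap : ∀ u ∈ U, fO u ∈ S \ C := by
      intro u hu
      rw [hmemU] at hu
      have h1 : fO u ∈ M.verts := hmaxv u hu
      rw [Finset.mem_sdiff, hmemS, hCdef, Finset.mem_filter]
      refine ⟨h1, fun hc => hu ?_⟩
      rw [hfOi u] at hc
      exact hc.2
    have h2 : U.card ≤ (S \ C).card :=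
      Finset.card_le_card_of_injOn fO hmap (hfOinj.injOn)
    rw [Finset.card_sdiff_of_subset hCS] at h2
    have := Finset.card_le_card hCS
    omega
  have hSA : S.card ≤ A.card + 2 * C.card := by
    have hsub : S \ A ⊆ C ∪ C.image fM := by
      intro a ha
      rw [Finset.mem_sdiff] at ha
      obtain ⟨haS, haA⟩ := ha
      rw [hAdef, Finset.mem_filter] at haA
      push_neg at haA
      rw [Finset.mem_union]
      by_cases h1 : fO a ∈ M.verts
      · left; rw [hCdef, Finset.mem_filter]; exact ⟨haS, h1⟩
      · right
        have h2 : fO (fM a) ∈ M.verts := haA haS h1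
        have haM : a ∈ M.verts := (hmemS a).mp haS
        refine Finset.mem_image.mpr ⟨fM a, ?_, hfMi a haM⟩
        rw [hCdef, Finset.mem_filter, hmemS]
        exact ⟨hfMmem a haM, h2⟩
    have h3 : (S \ A).card ≤ C.card + C.card :=
      (Finset.card_le_card hsub).trans
        ((Finset.card_union_le _ _).trans (by
          have := Finset.card_image_le (s := C) (f := fM); omega))
    rw [Finset.card_sdiff_of_subset hAS] at h3
    have := Finset.card_le_card hAS
    omega
  have hS2m : S.card ≤ 2 * M.edgeSet.ncard := by
    have hfin : M.edgeSet.Finite := Set.toFinite _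
    rw [Set.ncard_eq_toFinset_card' M.edgeSet]
    refine Finset.card_le_mul_card_image_of_maps_to (f := fun a => s(a, fM a))
      (t := M.edgeSet.toFinset) ?_ 2 ?_
    · intro a ha
      rw [Set.mem_toFinset]
      exact hfMadj a ((hmemS a).mp ha)
    · intro e he
      induction e with
      | h x y =>
        have hsub2 : S.filter (fun a => s(a, fM a) = s(x, y)) ⊆ {x, y} := by
          intro a ha
          rw [Finset.mem_filter] at ha
          have : a ∈ s(x, y) := ha.2 ▸ Sym2.mem_mk_left a (fM a)
          rw [Sym2.mem_iff] at this
          simpa using this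
        refine (Finset.card_le_card hsub2).trans ?_
        exact (Finset.card_insert_le _ _).trans (by simp)
  -- A is closed under fM, and fM swaps the two halves
  have hAmem : ∀ a ∈ A, a ∈ M.verts ∧ fO a ∉ M.verts ∧ fO (fM a) ∉ M.verts := by
    intro a ha
    rw [hAdef, Finset.mem_filter, hmemS] at ha
    exact ⟨ha.1, ha.2.1, ha.2.2⟩
  have hAfM : ∀ a ∈ A, fM a ∈ A := by
    intro a ha
    obtain ⟨h1, h2, h3⟩ := hAmem a ha
    rw [hAdef, Finset.mem_filter, hmemS, hfMi a h1]
    exact ⟨hfMmem a h1, h3, h2⟩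
  have hAA1 : A.card = 2 * A1.card := by
    have hsplit : A1.card + (A.filter (fun a => ¬ ι a < ι (fM a))).card = A.card :=
      Finset.card_filter_add_card_filter_not _
    have hbij : (A.filter (fun a => ¬ ι a < ι (fM a))).card = A1.card := by
      refine Finset.card_bij' (fun a _ => fM a) (fun a _ => fM a) ?_ ?_ ?_ ?_
      · intro a ha
        rw [Finset.mem_filter] at ha
        obtain ⟨haA, hlt⟩ := ha
        have haM := (hAmem a haA).1
        rw [hA1def, Finset.mem_filter, hfMi a haM]
        refine ⟨hAfM a haA, lt_of_le_of_ne (not_lt.mp hlt) ?_⟩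
        exact fun h => hfMne a haM (hιinj h).symm
      · intro a ha
        rw [hA1def, Finset.mem_filter] at ha
        obtain ⟨haA, hlt⟩ := ha
        have haM := (hAmem a haA).1
        rw [Finset.mem_filter, hfMi a haM]
        exact ⟨hAfM a haA, not_lt.mpr (le_of_lt hlt)⟩
      · intro a ha
        rw [Finset.mem_filter] at ha
        exact hfMi a (hAmem a ha.1).1
      · intro a ha
        rw [hA1def, Finset.mem_filter] at ha
        exact hfMi a (hAmem a ha.1).1
    omega
  -- the set of paths
  set pf : V → V × V × V × V := fun a => (fO a, a, fM a, fO (fM a)) with hpfdef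
  have hpfinj : Function.Injective pf := by
    intro a b h
    exact congrArg (fun p => p.2.1) h
  refine ⟨A1.image pf, ?_, ?_, ?_⟩
  · -- cardinality bound
    rw [Finset.card_image_of_injective _ hpfinj]
    have c1 : (S.card : ℝ) + U.card = Fintype.card V := by exact_mod_cast hUS
    have c2 : (C.card : ℝ) + U.card ≤ S.card := by exact_mod_cast hCU
    have c3 : (S.card : ℝ) ≤ A.card + 2 * C.card := by exact_mod_cast hSA
    have c4 : (S.card : ℝ) ≤ 2 * M.edgeSet.ncard := by exact_mod_cast hS2m
    have c5 : (A.card : ℝ) = 2 * A1.card := by exact_mod_cast hAA1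
    linarith
  · -- each element is a length-3 augmenting path
    intro p hp
    obtain ⟨a, ha1, rfl⟩ := Finset.mem_image.mp hp
    have haA : a ∈ A := Finset.mem_of_mem_filter a ha1
    obtain ⟨h1, h2, h3⟩ := hAmem a haA
    have hfMa : fM a ∈ M.verts := hfMmem a h1
    have hne : a ≠ fM a := hfMne a h1
    refine ⟨(hfOadj a).symm, hfMadj a h1, hfOadj (fM a), ?_, ?_, ?_⟩
    · rw [hsupp]; exact h2
    · rw [hsupp]; exact h3
    · show ({fO a, a, fM a, fO (fM a)} : Finset V).card = 4
      refine card4_aux ?_ ?_ ?_ hne ?_ ?_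
      · intro h; rw [← h] at h1; exact h2 h1
      · intro h; rw [← h] at hfMa; exact h2 hfMa
      · exact fun h => hne (hfOinj h)
      · intro h; rw [h] at h1; exact h3 h1
      · intro h; rw [h] at hfMa; exact h3 hfMa
  · -- disjointness
    intro p hp q hq hpq
    obtain ⟨a, haA1, rfl⟩ := Finset.mem_image.mp hp
    obtain ⟨b, hbA1, rfl⟩ := Finset.mem_image.mp hq
    have hab : a ≠ b := fun h => hpq (by rw [h])
    have haA : a ∈ A := Finset.mem_of_mem_filter a haA1
    have hbA : b ∈ A := Finset.mem_of_mem_filter b hbA1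
    obtain ⟨haM, ha2, ha3⟩ := hAmem a haA
    obtain ⟨hbM, hb2, hb3⟩ := hAmem b hbA
    have hfaM : fM a ∈ M.verts := hfMmem a haM
    have hfbM : fM b ∈ M.verts := hfMmem b hbM
    have hfab : fM a ≠ fM b := by
      intro h
      exact hab (by rw [← hfMi a haM, h, hfMi b hbM])
    have hafb : a ≠ fM b := by
      intro h
      rw [hA1def, Finset.mem_filter] at haA1 hbA1
      have h1 := haA1.2
      have h2 := hbA1.2
      rw [h, hfMi b hbM] at h1
      exact absurd (h1.trans h2) (lt_irrefl _)
    have hfa_b : fM a ≠ b := by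
      intro h
      exact hafb (by rw [← hfMi a haM, h])
    -- cross facts: fO-images are outside M.verts, a, fM a, b, fM b inside
    rw [Finset.disjoint_left]
    intro x hx hy
    simp only [pathVerts, Finset.mem_insert, Finset.mem_singleton] at hx hy
    rcases hx with rfl | rfl | rfl | rfl <;> rcases hy with h | h | h | h
    · exact hab (hfOinj h)
    · change fO a = b at h; rw [← h] at hbM; exact ha2 hbM
    · change fO a = fM b at h; rw [← h] at hfbM; exact ha2 hfbM
    · exact hafb (hfOinj h)
    · rw [h] at haM; exact hb2 haM
    · exact hab h
    · exact hafb h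
    · rw [h] at haM; exact hb3 haM
    · change fM a = fO b at h; rw [h] at hfaM; exact hb2 hfaM
    · exact hfa_b h
    · exact hfab h
    · change fM a = fO (fM b) at h; rw [h] at hfaM; exact hb3 hfaM
    · exact hfa_b (hfOinj h)
    · change fO (fM a) = b at h; rw [← h] at hbM; exact ha3 hbM
    · change fO (fM a) = fM b at h; rw [← h] at hfbM; exact ha3 hfbM
    · exact hfab (hfOinj h)
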